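/- Fix λ ∈ ℂ and define the ℂ-linear operators on Polynomial ℂ: T₁(p) = p′ (the formal derivative), T₂(p) = 2·X·p′ − λ·p, T₃(p) = X²·p′ − λ·X·p. Then there exists a ℂ-subspace V of Polynomial ℂ with V ≠ 0, V finite-dimensional, and V invariant under T₁, T₂, and T₃, if and only if λ is a natural number (λ lies in the image of ℕ in ℂ). Moreover, when λ = n for n ∈ ℕ, the span of 1, X, …, Xⁿ is such an invariant subspace. -/
import Mathlib


open Polynomial

/-- `T₁(p) = p′`. -/
noncomputable def qcT1 (p : Polynomial ℂ) : Polynomial ℂ := derivative p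

/-- `T₂(p) = 2·X·p′ − λ·p`. -/
noncomputable def qcT2 (lam : ℂ) (p : Polynomial ℂ) : Polynomial ℂ :=
  2 * X * derivative p - C lam * p

/-- `T₃(p) = X²·p′ − λ·X·p`. -/
noncomputable def qcT3 (lam : ℂ) (p : Polynomial ℂ) : Polynomial ℂ :=
  X ^ 2 * derivative p - C lam * X * p

lemma coeff_qcT3 (lam : ℂ) (p : Polynomial ℂ) (d : ℕ) :
    (qcT3 lam p).coeff (d + 1) = p.coeff d * ((d : ℂ) - lam) := by
  have h2 : C lam * X * p = C lam * (X * p) := by ring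
  rw [qcT3, coeff_sub, h2, coeff_C_mul, coeff_X_mul]
  have h1 : X ^ 2 * derivative p = derivative p * X ^ 2 := mul_comm _ _
  rw [h1, coeff_mul_X_pow']
  rcases d with _ | k
  · simp; ring
  · simp only [show k + 1 + 1 - 2 = k from rfl, if_pos (by omega : 2 ≤ k + 1 + 1),
      coeff_derivative]
    push_cast
    ring

-- invariance of span for lam = n
lemma qcT1_spanmem (n : ℕ) (p : Polynomial ℂ)
    (hp : p ∈ Submodule.span ℂ {q : Polynomial ℂ | ∃ i : ℕ, i ≤ n ∧ q = X ^ i}) :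
    qcT1 p ∈ Submodule.span ℂ {q : Polynomial ℂ | ∃ i : ℕ, i ≤ n ∧ q = X ^ i} := by
  induction hp using Submodule.span_induction with
  | mem q hq =>
    obtain ⟨i, hi, rfl⟩ := hq
    rw [qcT1, derivative_X_pow, ← smul_eq_C_mul]
    exact Submodule.smul_mem _ _ (Submodule.subset_span ⟨i - 1, by omega, rfl⟩)
  | zero => simp [qcT1]
  | add q r _ _ hq hr => simpa [qcT1] using Submodule.add_mem _ hq hr
  | smul c q _ hq =>
    have : qcT1 (c • q) = c • qcT1 q := by simp [qcT1]
    rw [this]; exact Submodule.smul_mem _ _ hq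

lemma qcT2_spanmem (lam : ℂ) (n : ℕ) (p : Polynomial ℂ)
    (hp : p ∈ Submodule.span ℂ {q : Polynomial ℂ | ∃ i : ℕ, i ≤ n ∧ q = X ^ i}) :
    qcT2 lam p ∈ Submodule.span ℂ {q : Polynomial ℂ | ∃ i : ℕ, i ≤ n ∧ q = X ^ i} := by
  induction hp using Submodule.span_induction with
  | mem q hq =>
    obtain ⟨i, hi, rfl⟩ := hq
    rcases i with _ | k
    · have : qcT2 lam (X ^ 0 : Polynomial ℂ) = (-lam) • (X ^ 0 : Polynomial ℂ) := by
        simp [qcT2, smul_eq_C_mul]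
      rw [this]
      exact Submodule.smul_mem _ _ (Submodule.subset_span ⟨0, by omega, rfl⟩)
    · have : qcT2 lam (X ^ (k+1) : Polynomial ℂ)
          = ((2 * (k+1) : ℂ) - lam) • (X ^ (k+1) : Polynomial ℂ) := by
        rw [qcT2, derivative_X_pow, smul_eq_C_mul]
        push_cast
        simp only [map_sub, map_mul, map_add, map_one, map_ofNat, C_1]
        ring
      rw [this]
      exact Submodule.smul_mem _ _ (Submodule.subset_span ⟨k+1, hi, rfl⟩)
  | zero => simp [qcT2]
  | add q r _ _ hq hr =>
    have : qcT2 lam (q + r) = qcT2 lam q + qcT2 lam r := by rw [qcT2, qcT2, qcT2]; ring_nf; simp; ring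
    rw [this]; exact Submodule.add_mem _ hq hr
  | smul c q _ hq =>
    have : qcT2 lam (c • q) = c • qcT2 lam q := by
      simp [qcT2, smul_eq_C_mul]; ring
    rw [this]; exact Submodule.smul_mem _ _ hq

lemma qcT3_spanmem (n : ℕ) (p : Polynomial ℂ)
    (hp : p ∈ Submodule.span ℂ {q : Polynomial ℂ | ∃ i : ℕ, i ≤ n ∧ q = X ^ i}) :
    qcT3 (n : ℂ) p ∈ Submodule.span ℂ {q : Polynomial ℂ | ∃ i : ℕ, i ≤ n ∧ q = X ^ i} := by
  induction hp using Submodule.span_induction with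
  | mem q hq =>
    obtain ⟨i, hi, rfl⟩ := hq
    have key : qcT3 (n : ℂ) (X ^ i : Polynomial ℂ)
        = ((i : ℂ) - (n : ℂ)) • (X ^ (i + 1) : Polynomial ℂ) := by
      rcases i with _ | k
      · simp [qcT3, smul_eq_C_mul]
      · rw [qcT3, derivative_X_pow, smul_eq_C_mul]
        push_cast
        simp only [map_sub, map_mul, map_add, map_one, map_ofNat, C_1]
        ring
    rw [key]
    rcases eq_or_lt_of_le hi with rfl | hlt
    · simp
    · exact Submodule.smul_mem _ _ (Submodule.subset_span ⟨i + 1, by omega, rfl⟩)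
  | zero => simp [qcT3]
  | add q r _ _ hq hr =>
    have : qcT3 (n:ℂ) (q + r) = qcT3 (n:ℂ) q + qcT3 (n:ℂ) r := by
      rw [qcT3, qcT3, qcT3]; simp; ring
    rw [this]; exact Submodule.add_mem _ hq hr
  | smul c q _ hq =>
    have : qcT3 (n:ℂ) (c • q) = c • qcT3 (n:ℂ) q := by
      simp [qcT3, smul_eq_C_mul]; ring
    rw [this]; exact Submodule.smul_mem _ _ hq

lemma forward_dir (lam : ℂ)
    (h : ∃ V : Submodule ℂ (Polynomial ℂ), V ≠ ⊥ ∧ FiniteDimensional ℂ V ∧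
        ∀ p ∈ V, qcT1 p ∈ V ∧ qcT2 lam p ∈ V ∧ qcT3 lam p ∈ V) :
    ∃ n : ℕ, lam = (n : ℂ) := by
  obtain ⟨V, hne, hfd, hinv⟩ := h
  -- V is finitely generated
  have hfg : V.FG := by
    rw [← Submodule.fg_top]
    exact Module.finite_def.mp hfd
  obtain ⟨S, hS⟩ := hfg
  set N : ℕ := S.sup Polynomial.natDegree with hN
  -- all elements of V have natDegree ≤ N
  have hbound : ∀ q ∈ V, q.natDegree ≤ N := by
    intro q hq
    have : V ≤ Polynomial.degreeLE ℂ (N : WithBot ℕ) := by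
      rw [← hS, Submodule.span_le]
      intro s hs
      rw [SetLike.mem_coe, Polynomial.mem_degreeLE]
      refine le_trans (Polynomial.degree_le_natDegree) ?_
      exact_mod_cast Finset.le_sup hs
    have hq' := Polynomial.mem_degreeLE.mp (this hq)
    exact Polynomial.natDegree_le_iff_degree_le.mpr hq'
  -- maximal degree element
  obtain ⟨p0, hp0V, hp0ne⟩ := (Submodule.ne_bot_iff V).mp hne
  classical
  set D : Finset ℕ := (Finset.range (N + 1)).filter
    (fun k => ∃ p ∈ V, p ≠ 0 ∧ p.natDegree = k) with hD
  have hDne : D.Nonempty := ⟨p0.natDegree, by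
    simp only [hD, Finset.mem_filter, Finset.mem_range]
    exact ⟨Nat.lt_succ_of_le (hbound p0 hp0V), p0, hp0V, hp0ne, rfl⟩⟩
  set d : ℕ := D.max' hDne with hd
  obtain ⟨-, p, hpV, hpne, hpd⟩ := Finset.mem_filter.mp (D.max'_mem hDne)
  rw [← hd] at hpd
  have hmax : ∀ q ∈ V, q ≠ 0 → q.natDegree ≤ d := by
    intro q hq hqne
    apply Finset.le_max'
    simp only [hD, Finset.mem_filter, Finset.mem_range]
    exact ⟨Nat.lt_succ_of_le (hbound q hq), q, hq, hqne, rfl⟩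
  refine ⟨d, ?_⟩
  by_contra hlam
  have hc : (qcT3 lam p).coeff (d + 1) ≠ 0 := by
    rw [coeff_qcT3]
    refine mul_ne_zero ?_ (sub_ne_zero.mpr fun hh => hlam hh.symm)
    rw [← hpd]
    exact Polynomial.leadingCoeff_ne_zero.mpr hpne
  have h3 : qcT3 lam p ∈ V := (hinv p hpV).2.2
  have h3ne : qcT3 lam p ≠ 0 := fun hh => hc (by simp [hh])
  have := Polynomial.le_natDegree_of_ne_zero hc
  have := hmax _ h3 h3ne
  omega

/-- The prototypical `sl₂` realization `∂, 2z∂ − λ, z²∂ − λz` admits a nonzero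
finite-dimensional invariant subspace of polynomials if and only if `λ` is a natural
number; moreover when `λ = n` the span of `1, X, …, Xⁿ` is such a subspace. -/
theorem sl2_invariant_subspace_iff_nat (lam : ℂ) :
    ((∃ V : Submodule ℂ (Polynomial ℂ), V ≠ ⊥ ∧ FiniteDimensional ℂ V ∧
        ∀ p ∈ V, qcT1 p ∈ V ∧ qcT2 lam p ∈ V ∧ qcT3 lam p ∈ V) ↔
      ∃ n : ℕ, lam = (n : ℂ)) ∧
    ∀ n : ℕ, lam = (n : ℂ) →
      ∀ p ∈ Submodule.span ℂ {q : Polynomial ℂ | ∃ i : ℕ, i ≤ n ∧ q = X ^ i},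
        qcT1 p ∈ Submodule.span ℂ {q : Polynomial ℂ | ∃ i : ℕ, i ≤ n ∧ q = X ^ i} ∧
        qcT2 lam p ∈ Submodule.span ℂ {q : Polynomial ℂ | ∃ i : ℕ, i ≤ n ∧ q = X ^ i} ∧
        qcT3 lam p ∈ Submodule.span ℂ {q : Polynomial ℂ | ∃ i : ℕ, i ≤ n ∧ q = X ^ i} := by
  have hmor : ∀ n : ℕ, lam = (n : ℂ) →
      ∀ p ∈ Submodule.span ℂ {q : Polynomial ℂ | ∃ i : ℕ, i ≤ n ∧ q = X ^ i},
        qcT1 p ∈ Submodule.span ℂ {q : Polynomial ℂ | ∃ i : ℕ, i ≤ n ∧ q = X ^ i} ∧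
        qcT2 lam p ∈ Submodule.span ℂ {q : Polynomial ℂ | ∃ i : ℕ, i ≤ n ∧ q = X ^ i} ∧
        qcT3 lam p ∈ Submodule.span ℂ {q : Polynomial ℂ | ∃ i : ℕ, i ≤ n ∧ q = X ^ i} := by
    rintro n rfl p hp
    exact ⟨qcT1_spanmem n p hp, qcT2_spanmem _ n p hp, qcT3_spanmem n p hp⟩
  refine ⟨⟨forward_dir lam, ?_⟩, hmor⟩
  rintro ⟨n, rfl⟩
  refine ⟨Submodule.span ℂ {q : Polynomial ℂ | ∃ i : ℕ, i ≤ n ∧ q = X ^ i}, ?_, ?_, ?_⟩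
  · intro hbot
    have h1 : (1 : Polynomial ℂ) ∈ Submodule.span ℂ {q : Polynomial ℂ | ∃ i : ℕ, i ≤ n ∧ q = X ^ i} :=
      Submodule.subset_span ⟨0, Nat.zero_le n, by simp⟩
    rw [hbot, Submodule.mem_bot] at h1
    exact one_ne_zero h1
  · apply FiniteDimensional.span_of_finite
    have : {q : Polynomial ℂ | ∃ i : ℕ, i ≤ n ∧ q = X ^ i}
        = (fun i : ℕ => (X : Polynomial ℂ) ^ i) '' Set.Iic n := by
      ext q; simp [Set.mem_image, eq_comm]
    rw [this]
    exact (Set.finite_Iic n).image _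
  · exact hmor n rfl
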